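/- Pushforward of relative translations along vertical fibrations: let φ : X → Y, g : X → Z, h : Y → Z be s-fibrations between compact ergodic gluing cubespaces with g = h∘φ and φ surjective and vertical. Then for every i ≥ 1 there is a group homomorphism Φ : Aut_i(g) → Aut_i(h) such that Φ(u) ∘ φ = φ ∘ u for all u ∈ Aut_i(g). -/

import Mathlib

open Function Set

/-- The all-ones vertex `1⃗` of the discrete cube `{0,1}^k`. -/
def topVtx (k : ℕ) : Fin k → Bool := fun _ => true

/-- A family of cube sets on a space `X`: for each `k`, a set of `k`-configurations. -/
structure CubeFamily (X : Type*) where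
  cubes : ∀ k : ℕ, Set ((Fin k → Bool) → X)

/-- A morphism of discrete cubes: each coordinate function is constantly `0`,
constantly `1`, a coordinate `ω i`, or a negated coordinate `!ω i`. -/
def IsDiscreteCubeMorphism {k l : ℕ} (ρ : (Fin k → Bool) → (Fin l → Bool)) : Prop :=
  ∀ j : Fin l, (∀ ω, ρ ω j = false) ∨ (∀ ω, ρ ω j = true) ∨
    (∃ i : Fin k, ∀ ω, ρ ω j = ω i) ∨ (∃ i : Fin k, ∀ ω, ρ ω j = !(ω i))

/-- The cubespace axioms: cube sets are closed, `C^0(X) = X`, and cubes are stable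
under precomposition with morphisms of discrete cubes. -/
def CubeFamily.IsCubespace {X : Type*} [TopologicalSpace X] (S : CubeFamily X) : Prop :=
  (∀ k, IsClosed (S.cubes k)) ∧ S.cubes 0 = Set.univ ∧
    ∀ {k l : ℕ} (ρ : (Fin k → Bool) → (Fin l → Bool)), IsDiscreteCubeMorphism ρ →
      ∀ c ∈ S.cubes l, (fun ω => c (ρ ω)) ∈ S.cubes k

/-- A cubespace morphism: a continuous map sending cubes to cubes. -/
def IsMorphism {X Y : Type*} [TopologicalSpace X] [TopologicalSpace Y]
    (S : CubeFamily X) (T : CubeFamily Y) (f : X → Y) : Prop :=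
  Continuous f ∧ ∀ k, ∀ c ∈ S.cubes k, (fun ω => f (c ω)) ∈ T.cubes k

/-- `lam` is a `k`-corner: each lower face `{ω : ω i = 0}` restricts to a `(k-1)`-cube.
(The restriction of `lam` to the face `{ω : ω i = 0}` is a `(k-1)`-cube iff the
degenerate configuration `ω ↦ lam (update ω i false)` is a `k`-cube, by the
discrete-cube-morphism axiom; the value of `lam` at `topVtx k` is irrelevant here.) -/
def IsCubeCorner {X : Type*} (S : CubeFamily X) {k : ℕ} (lam : (Fin k → Bool) → X) : Prop :=
  ∀ i : Fin k, (fun ω => lam (Function.update ω i false)) ∈ S.cubes k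

/-- Relative `k`-completion for `f : X → Y`: every `k`-corner in `X` whose `f`-image
extends to a `k`-cube `c` of `Y` can be completed to a `k`-cube of `X` lying over `c`. -/
def HasCompletionAt {X Y : Type*} (S : CubeFamily X) (T : CubeFamily Y) (f : X → Y)
    (k : ℕ) : Prop :=
  ∀ (lam : (Fin k → Bool) → X) (c : (Fin k → Bool) → Y), IsCubeCorner S lam → c ∈ T.cubes k →
    (∀ ω, ω ≠ topVtx k → f (lam ω) = c ω) →
    ∃ c₀ ∈ S.cubes k, (∀ ω, ω ≠ topVtx k → c₀ ω = lam ω) ∧ (fun ω => f (c₀ ω)) = c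

/-- A fibration: a cubespace morphism with `k`-completion for all `k ≥ 0`. -/
def IsFibration {X Y : Type*} [TopologicalSpace X] [TopologicalSpace Y]
    (S : CubeFamily X) (T : CubeFamily Y) (f : X → Y) : Prop :=
  IsMorphism S T f ∧ ∀ k, HasCompletionAt S T f k

/-- Relative `k`-uniqueness: two `k`-cubes agreeing off the top vertex with equal
`f`-images are equal. -/
def HasUniquenessAt {X Y : Type*} (S : CubeFamily X) (T : CubeFamily Y) (f : X → Y)
    (k : ℕ) : Prop :=
  ∀ c ∈ S.cubes k, ∀ c' ∈ S.cubes k, (∀ ω, ω ≠ topVtx k → c ω = c' ω) →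
    (fun ω => f (c ω)) = (fun ω => f (c' ω)) → c = c'

/-- An `s`-fibration: a fibration with `(s+1)`-uniqueness. -/
def IsSFibration {X Y : Type*} [TopologicalSpace X] [TopologicalSpace Y]
    (S : CubeFamily X) (T : CubeFamily Y) (f : X → Y) (s : ℕ) : Prop :=
  IsFibration S T f ∧ HasUniquenessAt S T f (s + 1)

/-- Absolute fibrancy: every `k`-corner completes to a `k`-cube. -/
def IsFibrant {X : Type*} (S : CubeFamily X) : Prop :=
  ∀ (k : ℕ) (lam : (Fin k → Bool) → X), IsCubeCorner S lam →
    ∃ c₀ ∈ S.cubes k, ∀ ω, ω ≠ topVtx k → c₀ ω = lam ω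

/-- Absolute `k`-uniqueness. -/
def HasUnique {X : Type*} (S : CubeFamily X) (k : ℕ) : Prop :=
  ∀ c ∈ S.cubes k, ∀ c' ∈ S.cubes k, (∀ ω, ω ≠ topVtx k → c ω = c' ω) → c = c'

/-- Ergodicity: every pair of points is a `1`-cube. -/
def IsErgodic {X : Type*} (S : CubeFamily X) : Prop := S.cubes 1 = Set.univ

/-- Concatenation `[c₁, c₂]` of two `k`-configurations along the last coordinate. -/
def concatCube {X : Type*} {k : ℕ} (c₁ c₂ : (Fin k → Bool) → X) :
    (Fin (k + 1) → Bool) → X :=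
  fun ω => if ω (Fin.last k) = true then c₂ (fun i => ω i.castSucc)
           else c₁ (fun i => ω i.castSucc)

/-- The gluing property. -/
def IsGluing {X : Type*} (S : CubeFamily X) : Prop :=
  ∀ (k : ℕ) (c₁ c₂ c₃ : (Fin k → Bool) → X), c₁ ∈ S.cubes k → c₂ ∈ S.cubes k →
    c₃ ∈ S.cubes k → concatCube c₁ c₂ ∈ S.cubes (k + 1) →
    concatCube c₂ c₃ ∈ S.cubes (k + 1) → concatCube c₁ c₃ ∈ S.cubes (k + 1)

/-- The `s`-th canonical relation `x ∼ₛ x'`. -/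
def CanonRel {X : Type*} (S : CubeFamily X) (s : ℕ) (x x' : X) : Prop :=
  ∃ c ∈ S.cubes (s + 1), ∃ c' ∈ S.cubes (s + 1),
    (∀ ω, ω ≠ topVtx (s + 1) → c ω = c' ω) ∧ c (topVtx (s + 1)) = x ∧ c' (topVtx (s + 1)) = x'

/-- The `s`-th canonical relation relative to `f` : `x ∼_{f,s} x'`. -/
def RelCanonRel {X Y : Type*} (S : CubeFamily X) (f : X → Y) (s : ℕ) (x x' : X) : Prop :=
  CanonRel S s x x' ∧ f x = f x'

/-- `F ⊆ {0,1}^n` is a face of codimension `k`: obtained by fixing the values of `k`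
coordinates. -/
def IsFaceOfCodim {n : ℕ} (F : Set (Fin n → Bool)) (k : ℕ) : Prop :=
  ∃ (I : Finset (Fin n)) (b : Fin n → Bool), I.card = k ∧ F = {ω | ∀ i ∈ I, ω i = b i}

open Classical in
/-- Modify the configuration `c` by applying `φ` on the face `F`. -/
noncomputable def faceModify {X : Type*} {n : ℕ} (F : Set (Fin n → Bool)) (φ : X → X)
    (c : (Fin n → Bool) → X) : (Fin n → Bool) → X :=
  fun ω => if ω ∈ F then φ (c ω) else c ω

/-- `φ` is a `k`-translation of the cubespace `S`: a cubespace automorphism such that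
modifying any `n`-cube (`n ≥ k`) by `φ` along any codimension-`k` face yields a cube. -/
def IsTranslationOf {X : Type*} (S : CubeFamily X) (φ : X → X) (k : ℕ) : Prop :=
  (∀ (n : ℕ) (c : (Fin n → Bool) → X), c ∈ S.cubes n ↔ (fun ω => φ (c ω)) ∈ S.cubes n) ∧
  ∀ (n : ℕ), k ≤ n → ∀ F : Set (Fin n → Bool), IsFaceOfCodim F k →
    ∀ c ∈ S.cubes n, faceModify F φ c ∈ S.cubes n

/-- The subcubespace on a subset `A ⊆ X`: cubes of `X` taking values in `A`. -/
def subFamily {X : Type*} (S : CubeFamily X) (A : Set X) : CubeFamily X :=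
  ⟨fun k => {c | c ∈ S.cubes k ∧ ∀ ω, c ω ∈ A}⟩

/-- `u` belongs to the `k`-th translation group `Aut_k(g)` of a map `g : X → Z`: it is
a homeomorphism of `X` fixing the fibers of `g` and restricting to a `k`-translation of
each subcubespace `g⁻¹(z)`. -/
def MemAut {X Z : Type*} [TopologicalSpace X] (S : CubeFamily X) (g : X → Z)
    (u : X → X) (k : ℕ) : Prop :=
  IsHomeomorph u ∧ (∀ x, g (u x) = g x) ∧
    ∀ z : Z, IsTranslationOf (subFamily S (g ⁻¹' {z})) u k

namespace PushAux

open Function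

variable {X : Type*} [TopologicalSpace X]

lemma cube_map {S : CubeFamily X} (hS : S.IsCubespace)
    {k l : ℕ} {ρ : (Fin k → Bool) → (Fin l → Bool)} (hρ : IsDiscreteCubeMorphism ρ)
    {c : (Fin l → Bool) → X} (hc : c ∈ S.cubes l) : (fun ω => c (ρ ω)) ∈ S.cubes k :=
  hS.2.2 ρ hρ c hc

lemma const_mem {S : CubeFamily X} (hS : S.IsCubespace) (x : X) (k : ℕ) :
    (fun _ : Fin k → Bool => x) ∈ S.cubes k := by
  have h0 : (fun _ : Fin 0 → Bool => x) ∈ S.cubes 0 := by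
    rw [hS.2.1]; trivial
  have := cube_map hS (ρ := fun (_ : Fin k → Bool) (j : Fin 0) => j.elim0)
    (fun j => j.elim0) h0
  exact this

lemma morph_init {n : ℕ} :
    IsDiscreteCubeMorphism (fun (ω : Fin (n+1) → Bool) (i : Fin n) => ω i.castSucc) := by
  intro j
  exact Or.inr (Or.inr (Or.inl ⟨j.castSucc, fun ω => rfl⟩))

lemma double_mem {S : CubeFamily X} (hS : S.IsCubespace) {n : ℕ}
    {c : (Fin n → Bool) → X} (hc : c ∈ S.cubes n) :
    concatCube c c ∈ S.cubes (n+1) := by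
  have := cube_map hS (morph_init (n := n)) hc
  convert this using 1
  funext ω
  simp only [concatCube]
  split <;> rfl

lemma morph_snoc {n : ℕ} (b : Bool) :
    IsDiscreteCubeMorphism (fun (ω : Fin n → Bool) => Fin.snoc ω b) := by
  intro j
  refine Fin.lastCases ?_ ?_ j
  · cases b
    · exact Or.inl (fun ω => by simp)
    · exact Or.inr (Or.inl (fun ω => by simp))
  · intro i
    exact Or.inr (Or.inr (Or.inl ⟨i, fun ω => by simp⟩))

lemma face_mem {S : CubeFamily X} (hS : S.IsCubespace) {n : ℕ}
    {c : (Fin (n+1) → Bool) → X} (hc : c ∈ S.cubes (n+1)) (b : Bool) :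
    (fun ω => c (Fin.snoc ω b)) ∈ S.cubes n :=
  cube_map hS (morph_snoc b) hc

lemma concat_decomp {n : ℕ} (c : (Fin (n+1) → Bool) → X) :
    concatCube (fun w => c (Fin.snoc w false)) (fun w => c (Fin.snoc w true)) = c := by
  funext ω
  simp only [concatCube]
  split
  · next hb => rw [show (fun i : Fin n => ω i.castSucc) = Fin.init ω from rfl,
      show (true : Bool) = ω (Fin.last n) from hb.symm, Fin.snoc_init_self]
  · next hb =>
    rw [show (fun i : Fin n => ω i.castSucc) = Fin.init ω from rfl,
      show (false : Bool) = ω (Fin.last n) from (Bool.not_eq_true _).mp hb |>.symm,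
      Fin.snoc_init_self]

lemma rev_mem {S : CubeFamily X} (hS : S.IsCubespace) {n : ℕ}
    {c₁ c₂ : (Fin n → Bool) → X} (hc : concatCube c₁ c₂ ∈ S.cubes (n+1)) :
    concatCube c₂ c₁ ∈ S.cubes (n+1) := by
  have hmor : IsDiscreteCubeMorphism
      (fun (ω : Fin (n+1) → Bool) (j : Fin (n+1)) =>
        if j = Fin.last n then !(ω (Fin.last n)) else ω j) := by
    intro j
    by_cases hj : j = Fin.last n
    · exact Or.inr (Or.inr (Or.inr ⟨Fin.last n, fun ω => by simp [hj]⟩))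
    · exact Or.inr (Or.inr (Or.inl ⟨j, fun ω => by simp [hj]⟩))
  have := cube_map hS hmor hc
  convert this using 1
  funext ω
  have hinit : (fun i : Fin n =>
      if i.castSucc = Fin.last n then !(ω (Fin.last n)) else ω i.castSucc)
      = fun i : Fin n => ω i.castSucc :=
    funext fun i => if_neg (Fin.castSucc_lt_last i).ne
  show concatCube c₂ c₁ ω
      = concatCube c₁ c₂ (fun j => if j = Fin.last n then !(ω (Fin.last n)) else ω j)
  simp only [concatCube]
  rw [hinit]
  by_cases hb : ω (Fin.last n) = true <;> simp [hb]

end PushAux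
namespace PushAux

section TopHelpers

variable {k n r : ℕ}

lemma eq_top_iff {ω : Fin k → Bool} : ω = topVtx k ↔ ∀ i, ω i = true := by
  constructor
  · intro h i; rw [h]; rfl
  · intro h; funext i; exact h i

lemma update_false_ne_top {w : Fin r → Bool} {l : Fin r} :
    Function.update w l false ≠ topVtx r := by
  intro h
  have := congrFun h l
  simp [Function.update_self, topVtx] at this

lemma snoc_true_top : (Fin.snoc (topVtx r) true : Fin (r+1) → Bool) = topVtx (r+1) := by
  funext j
  refine Fin.lastCases ?_ ?_ j
  · simp [topVtx]
  · intro i; simp [topVtx]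

lemma snoc_true_ne_top {w : Fin r → Bool} (hw : w ≠ topVtx r) :
    (Fin.snoc w true : Fin (r+1) → Bool) ≠ topVtx (r+1) := by
  intro h
  apply hw
  funext i
  have := congrFun h i.castSucc
  simpa [topVtx] using this

lemma snoc_false_ne_top {w : Fin r → Bool} :
    (Fin.snoc w false : Fin (r+1) → Bool) ≠ topVtx (r+1) := by
  intro h
  have := congrFun h (Fin.last r)
  simp [topVtx] at this

end TopHelpers

section Straight

variable {X : Type*} [TopologicalSpace X] {S : CubeFamily X}

lemma upd_mem (hS : S.IsCubespace) {r : ℕ} {q : (Fin r → Bool) → X}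
    (hq : q ∈ S.cubes r) (l : Fin r) (b : Bool) :
    (fun w => q (Function.update w l b)) ∈ S.cubes r := by
  have hmor : IsDiscreteCubeMorphism
      (fun (w : Fin r → Bool) (j : Fin r) => if j = l then b else w j) := by
    intro j
    by_cases hj : j = l
    · cases b
      · exact Or.inl (fun ω => by simp [hj])
      · exact Or.inr (Or.inl (fun ω => by simp [hj]))
    · exact Or.inr (Or.inr (Or.inl ⟨j, fun ω => by simp [hj]⟩))
  have := cube_map hS hmor hq
  convert this using 1
  funext w
  congr 1
  funext j
  by_cases hj : j = l <;> simp [hj, Function.update]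

/-- The key straightening step. -/
lemma straight (hS : S.IsCubespace) (hgS : IsGluing S) {r : ℕ}
    {q q' : (Fin r → Bool) → X} (hq : q ∈ S.cubes r)
    (hag : ∀ w, w ≠ topVtx r → q w = q' w)
    (hF : concatCube q q' ∈ S.cubes (r+1)) (l : Fin r) :
    concatCube (fun w => q (Function.update w l true))
      (fun w => if w l = true then q' w else q (Function.update w l true))
      ∈ S.cubes (r+1) := by
  classical
  set σ : (Fin (r+1) → Bool) → (Fin (r+1) → Bool) :=
    fun ω j => ω (Equiv.swap l.castSucc (Fin.last r) j) with hσ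
  have hσmor : IsDiscreteCubeMorphism σ := by
    intro j
    exact Or.inr (Or.inr (Or.inl ⟨Equiv.swap l.castSucc (Fin.last r) j, fun ω => rfl⟩))
  have hVσ : (fun ω => concatCube q q' (σ ω)) ∈ S.cubes (r+1) := cube_map hS hσmor hF
  have hσlast : ∀ ω : Fin (r+1) → Bool, σ ω (Fin.last r) = ω l.castSucc := by
    intro ω
    show ω (Equiv.swap l.castSucc (Fin.last r) (Fin.last r)) = ω l.castSucc
    rw [Equiv.swap_apply_right]
  have hσcast : ∀ (ω : Fin (r+1) → Bool) (i : Fin r),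
      σ ω i.castSucc = Function.update (fun i : Fin r => ω i.castSucc) l
        (ω (Fin.last r)) i := by
    intro ω i
    show ω (Equiv.swap l.castSucc (Fin.last r) i.castSucc) = _
    by_cases hi : i = l
    · subst hi
      rw [Equiv.swap_apply_left, Function.update_self]
    · have h1 : (i.castSucc : Fin (r+1)) ≠ l.castSucc := by
        simpa [Fin.castSucc_inj] using hi
      have h2 : (i.castSucc : Fin (r+1)) ≠ Fin.last r := (Fin.castSucc_lt_last i).ne
      rw [Equiv.swap_apply_of_ne_of_ne h1 h2, Function.update_of_ne hi]
  have fact1 : ∀ ω : Fin (r+1) → Bool,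
      concatCube q q' (σ ω) = if ω l.castSucc = true
        then q' (Function.update (fun i : Fin r => ω i.castSucc) l (ω (Fin.last r)))
        else q (Function.update (fun i : Fin r => ω i.castSucc) l (ω (Fin.last r))) := by
    intro ω
    have e1 : (fun i : Fin r => σ ω i.castSucc)
        = Function.update (fun i : Fin r => ω i.castSucc) l (ω (Fin.last r)) :=
      funext (hσcast ω)
    show (if σ ω (Fin.last r) = true then q' (fun i => σ ω i.castSucc)
        else q (fun i => σ ω i.castSucc)) = _
    rw [hσlast, e1]
  -- the three cubes to glue
  set Zc : (Fin r → Bool) → X := fun w => q (Function.update w l true) with hZc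
  set Ac : (Fin r → Bool) → X := fun w => q (Function.update w l false) with hAc
  set Bc : (Fin r → Bool) → X := fun w => if w l = true then q' (Function.update w l true)
    else q (Function.update w l true) with hBc
  have hZmem : Zc ∈ S.cubes r := upd_mem hS hq l true
  have hAmem : Ac ∈ S.cubes r := upd_mem hS hq l false
  have hBmem : Bc ∈ S.cubes r := by
    have := face_mem hS hVσ true
    convert this using 1
    funext w
    show Bc w = concatCube q q' (σ (Fin.snoc w true))
    rw [fact1]
    have e1 : (Fin.snoc w true : Fin (r+1) → Bool) l.castSucc = w l := Fin.snoc_castSucc ..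
    have e2 : (fun i : Fin r => (Fin.snoc w true : Fin (r+1) → Bool) i.castSucc) = w :=
      funext fun i => Fin.snoc_castSucc ..
    have e3 : (Fin.snoc w true : Fin (r+1) → Bool) (Fin.last r) = true := Fin.snoc_last ..
    rw [e1, e2, e3, hBc]
  -- glue condition 1 : concat Zc Ac is a cube (morphism image of q)
  have hZA : concatCube Zc Ac ∈ S.cubes (r+1) := by
    have hmor : IsDiscreteCubeMorphism
        (fun (ω : Fin (r+1) → Bool) (j : Fin r) =>
          if j = l then !(ω (Fin.last r)) else ω j.castSucc) := by
      intro j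
      by_cases hj : j = l
      · exact Or.inr (Or.inr (Or.inr ⟨Fin.last r, fun ω => by simp [hj]⟩))
      · exact Or.inr (Or.inr (Or.inl ⟨j.castSucc, fun ω => by simp [hj]⟩))
    have := cube_map hS hmor hq
    convert this using 1
    funext ω
    show concatCube Zc Ac ω = q (fun j => if j = l then !(ω (Fin.last r)) else ω j.castSucc)
    simp only [concatCube, hZc, hAc]
    by_cases hb : ω (Fin.last r) = true
    · rw [if_pos hb]
      congr 1
      funext j
      by_cases hj : j = l <;> simp [hj, Function.update, hb]
    · rw [if_neg hb]
      have hb' : ω (Fin.last r) = false := by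
        cases hx : ω (Fin.last r)
        · rfl
        · exact absurd hx hb
      congr 1
      funext j
      by_cases hj : j = l <;> simp [hj, Function.update, hb']
  -- glue condition 2 : concat Ac Bc = Vσ
  have hBev : ∀ w, Bc w = if w l = true then q' (Function.update w l true)
      else q (Function.update w l true) := fun _ => rfl
  have hAev : ∀ w, Ac w = q (Function.update w l false) := fun _ => rfl
  have hAB : concatCube Ac Bc ∈ S.cubes (r+1) := by
    convert hVσ using 1
    funext ω
    show concatCube Ac Bc ω = concatCube q q' (σ ω)
    rw [fact1 ω]
    have hil : (fun i : Fin r => ω i.castSucc) l = ω l.castSucc := rfl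
    simp only [concatCube]
    by_cases hb : ω (Fin.last r) = true
    · rw [if_pos hb]
      rw [hBev (fun i => ω i.castSucc)]
      simp only [hb, hil]
    · have hb' : ω (Fin.last r) = false := by
        cases hx : ω (Fin.last r)
        · rfl
        · exact absurd hx hb
      rw [if_neg hb, hAev]
      simp only [hb', hil]
      by_cases hl : ω l.castSucc = true
      · rw [if_pos hl]
        exact hag _ update_false_ne_top
      · rw [if_neg hl]
  -- glue
  have hZB : concatCube Zc Bc ∈ S.cubes (r+1) := hgS r Zc Ac Bc hZmem hAmem hBmem hZA hAB
  convert hZB using 2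
  funext w
  show (if w l = true then q' w else q (Function.update w l true)) = Bc w
  rw [hBev]
  by_cases hl : w l = true
  · rw [if_pos hl, if_pos hl]
    congr 1
    funext j
    by_cases hj : j = l <;> simp [hj, Function.update, hl]
  · rw [if_neg hl, if_neg hl]

end Straight

end PushAux
namespace PushAux

section Iter

variable {X : Type*} [TopologicalSpace X] {S : CubeFamily X}

/-- Iterated straightening: from a pair of cubes agreeing off the top whose
concatenation is a cube, the "replacement configuration" concatenation is a cube. -/
lemma straight_iter (hS : S.IsCubespace) (hgS : IsGluing S) {r : ℕ}
    {q q' : (Fin r → Bool) → X} (hq : q ∈ S.cubes r)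
    (hag : ∀ w, w ≠ topVtx r → q w = q' w)
    (hF : concatCube q q' ∈ S.cubes (r+1)) :
    concatCube (fun _ => q (topVtx r))
      (fun w => if w = topVtx r then q' (topVtx r) else q (topVtx r))
      ∈ S.cubes (r+1) := by
  classical
  set Q : ℕ → (Fin r → Bool) → X :=
    fun m w => q (fun i => if (i : ℕ) < m then true else w i) with hQ
  set Q' : ℕ → (Fin r → Bool) → X :=
    fun m w => if (∀ i : Fin r, (i : ℕ) < m → w i = true) then q' w else Q m w with hQ'
  have hQev : ∀ m w, Q m w = q (fun i => if (i : ℕ) < m then true else w i) := fun _ _ => rfl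
  have hQ'ev : ∀ m w, Q' m w
      = if (∀ i : Fin r, (i : ℕ) < m → w i = true) then q' w else Q m w := fun _ _ => rfl
  have main : ∀ m, m ≤ r → Q m ∈ S.cubes r ∧
      (∀ w, w ≠ topVtx r → Q m w = Q' m w) ∧
      concatCube (Q m) (Q' m) ∈ S.cubes (r+1) := by
    intro m
    induction m with
    | zero =>
      intro _
      have e1 : Q 0 = q := by
        funext w
        have h0 : (fun i : Fin r => if (i : ℕ) < 0 then true else w i) = w := by
          funext i
          exact if_neg (Nat.not_lt_zero _)
        rw [hQev, h0]
      have e2 : Q' 0 = q' := by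
        funext w
        rw [hQ'ev]
        rw [if_pos (fun i hi => absurd hi (Nat.not_lt_zero _))]
      refine ⟨by rw [e1]; exact hq, ?_, ?_⟩
      · intro w hw
        rw [e1, e2]
        exact hag w hw
      · rw [e1, e2]; exact hF
    | succ m ih =>
      intro hm
      obtain ⟨ihq, ihag, ihF⟩ := ih (Nat.le_of_succ_le hm)
      set l : Fin r := ⟨m, hm⟩ with hl
      have hstep := straight hS hgS ihq ihag ihF l
      -- identify the new pair
      have E1 : (fun w => Q m (Function.update w l true)) = Q (m+1) := by
        funext w
        rw [hQev, hQev]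
        congr 1
        funext i
        by_cases h1 : (i : ℕ) < m
        · rw [if_pos h1, if_pos (Nat.lt_succ_of_lt h1)]
        · by_cases h2 : (i : ℕ) = m
          · have : i = l := Fin.ext h2
            subst this
            rw [if_neg h1, if_pos (by omega), Function.update_self]
          · rw [if_neg h1, if_neg (by omega),
              Function.update_of_ne (fun hc => h2 (by rw [hc]))]
      have E2 : (fun w => if w l = true then Q' m w else Q m (Function.update w l true))
          = Q' (m+1) := by
        funext w
        by_cases hwl : w l = true
        · rw [if_pos hwl, hQ'ev, hQ'ev]
          by_cases hall : ∀ i : Fin r, (i : ℕ) < m → w i = true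
          · rw [if_pos hall, if_pos ?_]
            intro i hi
            by_cases h2 : (i : ℕ) = m
            · have : i = l := Fin.ext h2
              rw [this]; exact hwl
            · exact hall i (by omega)
          · rw [if_neg hall, if_neg ?_]
            swap
            · intro hall'
              exact hall (fun i hi => hall' i (Nat.lt_succ_of_lt hi))
            rw [hQev, hQev]
            congr 1
            funext i
            by_cases h1 : (i : ℕ) < m
            · rw [if_pos h1, if_pos (Nat.lt_succ_of_lt h1)]
            · by_cases h2 : (i : ℕ) = m
              · have : i = l := Fin.ext h2
                rw [if_neg h1, if_pos (by omega), this, hwl]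
              · rw [if_neg h1, if_neg (by omega)]
        · rw [if_neg hwl]
          have e3 : Q m (Function.update w l true) = Q (m+1) w := congrFun E1 w
          rw [e3, hQ'ev, if_neg ?_]
          intro hall
          exact hwl (hall l (by simp [hl]))
      rw [E1, E2] at hstep
      refine ⟨?_, ?_, hstep⟩
      · have hmor : IsDiscreteCubeMorphism
            (fun (w : Fin r → Bool) (i : Fin r) => if (i : ℕ) < m+1 then true else w i) := by
          intro i
          by_cases h1 : (i : ℕ) < m+1
          · exact Or.inr (Or.inl (fun ω => by simp [h1]))
          · exact Or.inr (Or.inr (Or.inl ⟨i, fun ω => by simp [h1]⟩))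
        exact cube_map hS hmor hq
      · intro w hw
        rw [hQ'ev]
        by_cases hall : ∀ i : Fin r, (i : ℕ) < m+1 → w i = true
        · rw [if_pos hall, hQev]
          have : (fun i : Fin r => if (i : ℕ) < m+1 then true else w i) = w := by
            funext i
            by_cases h1 : (i : ℕ) < m+1
            · rw [if_pos h1, hall i h1]
            · rw [if_neg h1]
          rw [this]
          exact hag w hw
        · rw [if_neg hall]
  obtain ⟨_, _, hfin⟩ := main r le_rfl
  have e1 : Q r = fun _ => q (topVtx r) := by
    funext w
    rw [hQev]
    congr 1
    funext i
    rw [if_pos i.isLt]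
    rfl
  have e2 : Q' r = fun w => if w = topVtx r then q' (topVtx r) else q (topVtx r) := by
    funext w
    rw [hQ'ev]
    by_cases hall : ∀ i : Fin r, (i : ℕ) < r → w i = true
    · have hwtop : w = topVtx r := by
        funext i
        exact hall i i.isLt
      rw [if_pos hall, if_pos hwtop, hwtop]
    · have hwtop : ¬ (w = topVtx r) := by
        intro hc
        exact hall (fun i _ => by rw [hc]; rfl)
      rw [if_neg hall, if_neg hwtop, congrFun e1 w]
  rw [e1, e2] at hfin
  exact hfin

end Iter

end PushAux
namespace PushAux

section Trans

variable {X : Type*} [TopologicalSpace X]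

lemma sub_cube_map {S : CubeFamily X} (hS : S.IsCubespace) {A : Set X}
    {k l : ℕ} {ρ : (Fin k → Bool) → (Fin l → Bool)} (hρ : IsDiscreteCubeMorphism ρ)
    {c : (Fin l → Bool) → X} (hc : c ∈ (subFamily S A).cubes l) :
    (fun ω => c (ρ ω)) ∈ (subFamily S A).cubes k :=
  ⟨cube_map hS hρ hc.1, fun ω => hc.2 _⟩

lemma sub_double_mem {S : CubeFamily X} (hS : S.IsCubespace) {A : Set X} {n : ℕ}
    {c : (Fin n → Bool) → X} (hc : c ∈ (subFamily S A).cubes n) :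
    concatCube c c ∈ (subFamily S A).cubes (n+1) := by
  refine ⟨double_mem hS hc.1, ?_⟩
  intro ω
  simp only [concatCube]
  split <;> exact hc.2 _

lemma trans_step {S : CubeFamily X} (hS : S.IsCubespace) {A : Set X} {u : X → X} {k : ℕ}
    (ht : IsTranslationOf (subFamily S A) u (k+1)) :
    IsTranslationOf (subFamily S A) u k := by
  refine ⟨ht.1, ?_⟩
  intro n hkn F hF c hc
  obtain ⟨I, b, hcard, hFeq⟩ := hF
  have hdub : concatCube c c ∈ (subFamily S A).cubes (n+1) := sub_double_mem hS hc
  have hlastnot : Fin.last n ∉ I.image Fin.castSucc := by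
    intro hmem
    obtain ⟨i, _, hi⟩ := Finset.mem_image.mp hmem
    exact (Fin.castSucc_lt_last i).ne hi
  have hcard2 : (insert (Fin.last n) (I.image Fin.castSucc)).card = k + 1 := by
    rw [Finset.card_insert_of_notMem hlastnot,
      Finset.card_image_of_injective _ (Fin.castSucc_injective n), hcard]
  have hface : IsFaceOfCodim
      {ω : Fin (n+1) → Bool | ∀ j ∈ insert (Fin.last n) (I.image Fin.castSucc),
        ω j = (Fin.snoc b true : Fin (n+1) → Bool) j} (k+1) := by
    exact ⟨insert (Fin.last n) (I.image Fin.castSucc), (Fin.snoc b true : Fin (n+1) → Bool), hcard2, rfl⟩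
  have hmod := ht.2 (n+1) (by omega) _ hface _ hdub
  have hres := sub_cube_map hS (morph_snoc true) hmod
  convert hres using 1
  funext ω
  have hmemiff : ((Fin.snoc ω true : Fin (n+1) → Bool) ∈
      {ω' : Fin (n+1) → Bool | ∀ j ∈ insert (Fin.last n) (I.image Fin.castSucc),
        ω' j = (Fin.snoc b true : Fin (n+1) → Bool) j}) ↔ ω ∈ F := by
    rw [hFeq]
    constructor
    · intro hmem i hi
      have := hmem i.castSucc (Finset.mem_insert_of_mem (Finset.mem_image_of_mem _ hi))
      simpa using this
    · intro hmem j hj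
      rcases Finset.mem_insert.mp hj with hj | hj
      · subst hj; simp
      · obtain ⟨i, hi, rfl⟩ := Finset.mem_image.mp hj
        simpa using hmem i hi
  have hval : concatCube c c (Fin.snoc ω true) = c ω := by
    simp only [concatCube]
    rw [if_pos (by simp : (Fin.snoc ω true : Fin (n+1) → Bool) (Fin.last n) = true)]
    congr 1
    funext i
    simp
  show faceModify F u c ω = faceModify _ u (concatCube c c) (Fin.snoc ω true)
  simp only [faceModify]
  by_cases hω : ω ∈ F
  · rw [if_pos hω, if_pos (hmemiff.mpr hω), hval]
  · rw [if_neg hω, if_neg (fun hc' => hω (hmemiff.mp hc')), hval]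

lemma trans_to_one {S : CubeFamily X} (hS : S.IsCubespace) {A : Set X} {u : X → X}
    {i : ℕ} (hi : 1 ≤ i) (ht : IsTranslationOf (subFamily S A) u i) :
    IsTranslationOf (subFamily S A) u 1 := by
  obtain ⟨m, rfl⟩ : ∃ m, i = 1 + m := ⟨i - 1, by omega⟩
  clear hi
  induction m with
  | zero => exact ht
  | succ p ih =>
    exact ih (trans_step hS (show IsTranslationOf (subFamily S A) u ((1+p)+1) from ht))

lemma transP2 {S : CubeFamily X} (hS : S.IsCubespace) {A : Set X} {u : X → X}
    (ht : IsTranslationOf (subFamily S A) u 1) {n : ℕ}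
    {d : (Fin n → Bool) → X} (hd : d ∈ (subFamily S A).cubes n) :
    concatCube d (fun ω => u (d ω)) ∈ (subFamily S A).cubes (n+1) := by
  have hdub : concatCube d d ∈ (subFamily S A).cubes (n+1) := sub_double_mem hS hd
  have hface : IsFaceOfCodim {ω : Fin (n+1) → Bool | ω (Fin.last n) = true} 1 := by
    refine ⟨{Fin.last n}, fun _ => true, Finset.card_singleton _, ?_⟩
    ext ω
    simp
  have hmod := ht.2 (n+1) (by omega) _ hface _ hdub
  convert hmod using 1
  funext ω
  simp only [faceModify, concatCube]
  by_cases hb : ω (Fin.last n) = true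
  · rw [if_pos hb, if_pos (show ω ∈ {ω' : Fin (n+1) → Bool | ω' (Fin.last n) = true} from hb),
      if_pos hb]
  · rw [if_neg hb, if_neg (show ω ∉ {ω' : Fin (n+1) → Bool | ω' (Fin.last n) = true} from hb),
      if_neg hb]

end Trans

section Kcore

variable {X Y Z : Type*} [TopologicalSpace X] [TopologicalSpace Y] [TopologicalSpace Z]

lemma init_ne_top {r : ℕ} {ω : Fin (r+1) → Bool} (hω : ω ≠ topVtx (r+1))
    (hb : ω (Fin.last r) = true) :
    (fun i : Fin r => ω i.castSucc) ≠ topVtx r := by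
  intro hc
  apply hω
  funext j
  refine Fin.lastCases ?_ ?_ j
  · exact hb
  · intro i
    exact congrFun hc i

lemma Kcore {S : CubeFamily X} {T : CubeFamily Y} {U : CubeFamily Z}
    (hS : S.IsCubespace) (hT : T.IsCubespace) (hgS : IsGluing S) {r : ℕ}
    {φ : X → Y} {g : X → Z} {h : Y → Z}
    (hφm : IsMorphism S T φ)
    (hhuniq : HasUniquenessAt T U h (r+1+1))
    (hcomp : ∀ x, g x = h (φ x))
    (hvert : ∀ x x' : X, RelCanonRel T h r (φ x) (φ x') → RelCanonRel S g r x x')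
    (v : X → X) (hv1 : ∀ x, g (v x) = g x)
    (hv2 : ∀ (z : Z) (d : (Fin (r+1) → Bool) → X), d ∈ S.cubes (r+1) →
      (∀ ω, g (d ω) = z) → concatCube d (fun ω => v (d ω)) ∈ S.cubes (r+1+1))
    {x x' : X} (hxx' : φ x = φ x') : φ (v x) = φ (v x') := by
  classical
  have hg : g x = g x' := by rw [hcomp, hcomp, hxx']
  -- step 1 : vertical transfer from constant witnesses
  have hrel : RelCanonRel S g r x x' := by
    apply hvert
    refine ⟨⟨fun _ => φ x, const_mem hT _ _, fun _ => φ x', const_mem hT _ _,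
      fun ω _ => hxx', rfl, rfl⟩, by rw [hxx']⟩
  obtain ⟨⟨w, hw, w', hw', hagree, hwt, hw't⟩, -⟩ := hrel
  -- step 2 : glue to get the concatenated pair
  set w1 : (Fin r → Bool) → X := fun ω => w (Fin.snoc ω true) with hw1
  set w0 : (Fin r → Bool) → X := fun ω => w (Fin.snoc ω false) with hw0
  set w1' : (Fin r → Bool) → X := fun ω => w' (Fin.snoc ω true) with hw1'
  have hw1mem : w1 ∈ S.cubes r := face_mem hS hw true
  have hw0mem : w0 ∈ S.cubes r := face_mem hS hw false
  have hw1'mem : w1' ∈ S.cubes r := face_mem hS hw' true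
  have hdecw : concatCube w0 w1 = w := concat_decomp w
  have hw0eq : (fun ω => w' (Fin.snoc ω false)) = w0 := by
    funext ω
    exact (hagree _ snoc_false_ne_top).symm
  have hdecw' : concatCube w0 w1' = w' := by
    have := concat_decomp w'
    rwa [hw0eq] at this
  have hrev : concatCube w1 w0 ∈ S.cubes (r+1) := rev_mem hS (hdecw ▸ hw)
  have hF : concatCube w1 w1' ∈ S.cubes (r+1) :=
    hgS r w1 w0 w1' hw1mem hw0mem hw1'mem hrev (hdecw' ▸ hw')
  -- step 3 : straighten
  have hagp : ∀ ω, ω ≠ topVtx r → w1 ω = w1' ω := by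
    intro ω hω
    exact hagree _ (snoc_true_ne_top hω)
  have hstraight := straight_iter hS hgS hw1mem hagp hF
  have hx1 : w1 (topVtx r) = x := by
    rw [hw1, ← hwt]
    show w (Fin.snoc (topVtx r) true) = w (topVtx (r+1))
    rw [snoc_true_top]
  have hx1' : w1' (topVtx r) = x' := by
    rw [hw1', ← hw't]
    show w' (Fin.snoc (topVtx r) true) = w' (topVtx (r+1))
    rw [snoc_true_top]
  set d : (Fin (r+1) → Bool) → X := fun _ => x with hd
  set d' : (Fin (r+1) → Bool) → X := fun ω => if ω = topVtx (r+1) then x' else x with hd'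
  have hdev : ∀ ι, d ι = x := fun _ => rfl
  have hd'ev : ∀ ι, d' ι = if ι = topVtx (r+1) then x' else x := fun _ => rfl
  have hd'mem : d' ∈ S.cubes (r+1) := by
    convert hstraight using 1
    funext ω
    rw [hd'ev]
    simp only [concatCube]
    rw [hx1, hx1']
    by_cases hb : ω (Fin.last r) = true
    · rw [if_pos hb]
      by_cases hi : (fun i : Fin r => ω i.castSucc) = topVtx r
      · have hωtop : ω = topVtx (r+1) := by
          funext j
          refine Fin.lastCases ?_ ?_ j
          · exact hb
          · intro i'
            exact congrFun hi i'
        rw [if_pos hi, if_pos hωtop]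
      · have hωtop : ω ≠ topVtx (r+1) := by
          intro hc
          apply hi
          funext i'
          rw [hc]
          rfl
        rw [if_neg hi, if_neg hωtop]
    · have hωtop : ω ≠ topVtx (r+1) := by
        intro hc
        rw [hc] at hb
        exact hb rfl
      rw [if_neg hb, if_neg hωtop]
  have hdmem : d ∈ S.cubes (r+1) := const_mem hS x _
  -- step 4 : apply the translation data
  have hd'fib : ∀ ω, g (d' ω) = g x := by
    intro ω
    rw [hd'ev]
    by_cases hω : ω = topVtx (r+1)
    · rw [if_pos hω, hg]
    · rw [if_neg hω]
  have hE : concatCube d (fun ω => v (d ω)) ∈ S.cubes (r+1+1) :=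
    hv2 (g x) d hdmem (fun ω => rfl)
  have hE' : concatCube d' (fun ω => v (d' ω)) ∈ S.cubes (r+1+1) :=
    hv2 (g x) d' hd'mem hd'fib
  set D : (Fin (r+1+1) → Bool) → Y := fun ω => φ (concatCube d (fun ω => v (d ω)) ω) with hD
  set D' : (Fin (r+1+1) → Bool) → Y :=
    fun ω => φ (concatCube d' (fun ω => v (d' ω)) ω) with hD'
  have hDmem : D ∈ T.cubes (r+1+1) := hφm.2 _ _ hE
  have hD'mem : D' ∈ T.cubes (r+1+1) := hφm.2 _ _ hE'
  have hd'val : ∀ ι, d' ι = x ∨ (ι = topVtx (r+1) ∧ d' ι = x') := by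
    intro ι
    rw [hd'ev]
    by_cases hι : ι = topVtx (r+1)
    · exact Or.inr ⟨hι, by rw [if_pos hι]⟩
    · exact Or.inl (by rw [if_neg hι])
  have hagDD : ∀ ω, ω ≠ topVtx (r+1+1) → D ω = D' ω := by
    intro ω hω
    show φ (concatCube d (fun ω => v (d ω)) ω) = φ (concatCube d' (fun ω => v (d' ω)) ω)
    simp only [concatCube]
    by_cases hb : ω (Fin.last (r+1)) = true
    · rw [if_pos hb, if_pos hb]
      have hne := init_ne_top hω hb
      have h2 : d' (fun i => ω i.castSucc) = x := by
        rcases hd'val (fun i => ω i.castSucc) with h1 | ⟨h1, _⟩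
        · exact h1
        · exact absurd h1 hne
      rw [h2]
    · rw [if_neg hb, if_neg hb]
      rcases hd'val (fun i => ω i.castSucc) with h1 | ⟨_, h1⟩
      · rw [h1]
      · rw [h1]
        exact hxx'
  have hhDD : (fun ω => h (D ω)) = fun ω => h (D' ω) := by
    funext ω
    show h (φ (concatCube d (fun ω => v (d ω)) ω)) = h (φ (concatCube d' (fun ω => v (d' ω)) ω))
    simp only [concatCube]
    by_cases hb : ω (Fin.last (r+1)) = true
    · rw [if_pos hb, if_pos hb, ← hcomp, ← hcomp, hv1, hv1, hd'fib]
    · rw [if_neg hb, if_neg hb, ← hcomp, ← hcomp, hd'fib]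
  have hfinal := hhuniq D hDmem D' hD'mem hagDD hhDD
  have hDtop : D (topVtx (r+1+1)) = φ (v x) := by
    show φ (concatCube d (fun ω => v (d ω)) (topVtx (r+1+1))) = φ (v x)
    simp only [concatCube]
    rw [if_pos (show (topVtx (r+1+1)) (Fin.last (r+1)) = true from rfl)]
  have hD'top : D' (topVtx (r+1+1)) = φ (v x') := by
    show φ (concatCube d' (fun ω => v (d' ω)) (topVtx (r+1+1))) = φ (v x')
    simp only [concatCube]
    rw [if_pos (show (topVtx (r+1+1)) (Fin.last (r+1)) = true from rfl)]
    have h2 : d' (fun i : Fin (r+1) => (topVtx (r+1+1)) i.castSucc) = x' := by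
      rw [hd'ev, if_pos (show (fun i : Fin (r+1) => (topVtx (r+1+1)) i.castSucc)
        = topVtx (r+1) from rfl)]
    rw [h2]
  rw [← hDtop, ← hD'top]
  exact congrFun hfinal _

end Kcore

end PushAux
namespace PushAux

open Finset

def wt {n : ℕ} (v : Fin n → Bool) : ℕ := (Finset.univ.filter (fun i => v i = true)).card

def supp {n : ℕ} (v : Fin n → Bool) : Finset (Fin n) :=
  Finset.univ.filter (fun i => v i = true)

lemma supp_card {n : ℕ} (v : Fin n → Bool) : (supp v).card = wt v := rfl

lemma mem_supp {n : ℕ} {v : Fin n → Bool} {j : Fin n} : j ∈ supp v ↔ v j = true := by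
  simp [supp]

noncomputable def isoV {n : ℕ} (v : Fin n → Bool) : Fin (wt v) ≃o {x // x ∈ supp v} :=
  Finset.orderIsoOfFin (supp v) (supp_card v)

noncomputable def emb {n : ℕ} (v : Fin n → Bool) (w : Fin (wt v) → Bool) : Fin n → Bool :=
  fun j => if h : j ∈ supp v then w ((isoV v).symm ⟨j, h⟩) else false

lemma emb_morph {n : ℕ} (v : Fin n → Bool) : IsDiscreteCubeMorphism (emb v) := by
  intro j
  by_cases h : j ∈ supp v
  · exact Or.inr (Or.inr (Or.inl ⟨(isoV v).symm ⟨j, h⟩, fun w => dif_pos h⟩))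
  · exact Or.inl (fun w => dif_neg h)

lemma emb_top {n : ℕ} (v : Fin n → Bool) : emb v (topVtx (wt v)) = v := by
  funext j
  by_cases h : j ∈ supp v
  · rw [emb, dif_pos h]
    exact (mem_supp.mp h).symm
  · rw [emb, dif_neg h]
    cases hv : v j
    · rfl
    · exact absurd (mem_supp.mpr hv) h

lemma emb_le {n : ℕ} {v : Fin n → Bool} {w : Fin (wt v) → Bool} {j : Fin n}
    (hj : emb v w j = true) : v j = true := by
  by_cases h : j ∈ supp v
  · exact mem_supp.mp h
  · rw [emb, dif_neg h] at hj
    exact absurd hj (by simp)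

lemma emb_apply_iso {n : ℕ} (v : Fin n → Bool) (w : Fin (wt v) → Bool) (i : Fin (wt v)) :
    emb v w ((isoV v i : {x // x ∈ supp v}) : Fin n) = w i := by
  have hmem : ((isoV v i : {x // x ∈ supp v}) : Fin n) ∈ supp v := (isoV v i).2
  rw [emb, dif_pos hmem]
  congr 1
  have : (⟨((isoV v i : {x // x ∈ supp v}) : Fin n), hmem⟩ : {x // x ∈ supp v}) = isoV v i :=
    Subtype.ext rfl
  rw [this, OrderIso.symm_apply_apply]

lemma emb_inj {n : ℕ} {v : Fin n → Bool} {w w' : Fin (wt v) → Bool}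
    (h : emb v w = emb v w') : w = w' := by
  funext i
  have := congrFun h ((isoV v i : {x // x ∈ supp v}) : Fin n)
  rwa [emb_apply_iso, emb_apply_iso] at this

lemma wt_emb_le {n : ℕ} (v : Fin n → Bool) (w : Fin (wt v) → Bool) :
    wt (emb v w) ≤ wt v := by
  apply Finset.card_le_card
  intro j hj
  exact mem_supp.mpr (emb_le (mem_supp.mp hj))

lemma wt_emb_lt {n : ℕ} {v : Fin n → Bool} {w : Fin (wt v) → Bool}
    (hw : w ≠ topVtx (wt v)) : wt (emb v w) < wt v := by
  rcases lt_or_eq_of_le (wt_emb_le v w) with h | h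
  · exact h
  · exfalso
    apply hw
    apply emb_inj (v := v)
    rw [emb_top]
    have hsub : supp (emb v w) ⊆ supp v := by
      intro j hj
      exact mem_supp.mpr (emb_le (mem_supp.mp hj))
    have hseq : supp (emb v w) = supp v :=
      Finset.eq_of_subset_of_card_le hsub (le_of_eq h.symm)
    funext j
    cases hev : emb v w j
    · cases hv : v j
      · rfl
      · exfalso
        have : j ∈ supp (emb v w) := hseq ▸ mem_supp.mpr hv
        rw [mem_supp.mp this] at hev
        exact absurd hev (by simp)
    · exact (emb_le hev).symm

lemma wt_le_n {n : ℕ} (v : Fin n → Bool) : wt v ≤ n := by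
  have := Finset.card_filter_le (Finset.univ : Finset (Fin n)) (fun i => v i = true)
  simpa [wt] using this

/-- Cube-surjectivity of fibrations. -/
lemma lift_cube {X Y : Type*} [TopologicalSpace X] [TopologicalSpace Y]
    {S : CubeFamily X} {T : CubeFamily Y} {φ : X → Y}
    (hS : S.IsCubespace) (hT : T.IsCubespace)
    (hcompl : ∀ k, HasCompletionAt S T φ k) (hsurj : Function.Surjective φ)
    (n : ℕ) (c : (Fin n → Bool) → Y) (hc : c ∈ T.cubes n) :
    ∃ d ∈ S.cubes n, ∀ ω, φ (d ω) = c ω := by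
  classical
  have hzero : ∀ (k : ℕ), k = 0 → ∀ f : (Fin k → Bool) → X, f ∈ S.cubes k := by
    intro k hk
    subst hk
    intro f
    rw [hS.2.1]
    trivial
  have main : ∀ m : ℕ, ∃ lam : (Fin n → Bool) → X,
      (∀ v, wt v ≤ m → φ (lam v) = c v) ∧
      (∀ v, wt v ≤ m → (fun w => lam (emb v w)) ∈ S.cubes (wt v)) := by
    intro m
    induction m with
    | zero =>
      refine ⟨fun v => (hsurj (c v)).choose, ?_, ?_⟩
      · intro v _
        exact (hsurj (c v)).choose_spec
      · intro v hv
        exact hzero _ (Nat.le_zero.mp hv) _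
    | succ m ih =>
      obtain ⟨lam, inv1, inv2⟩ := ih
      have hfill : ∀ v : Fin n → Bool, wt v = m + 1 →
          ∃ c₀ : (Fin (wt v) → Bool) → X, c₀ ∈ S.cubes (wt v) ∧
            (∀ w, w ≠ topVtx (wt v) → c₀ w = lam (emb v w)) ∧
            (fun w => φ (c₀ w)) = fun w => c (emb v w) := by
        intro v hv
        have hcorner : IsCubeCorner S (fun w => lam (emb v w)) := by
          intro i
          -- direction i : kill coordinate j₀
          set j₀ : Fin n := ((isoV v i : {x // x ∈ supp v}) : Fin n) with hj₀
          have hj₀mem : j₀ ∈ supp v := (isoV v i).2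
          set v' : Fin n → Bool := Function.update v j₀ false with hv'
          have hsub : supp v' ⊆ supp v := by
            intro j hj
            have hj' := mem_supp.mp hj
            by_cases hjj : j = j₀
            · subst hjj
              rw [hv', Function.update_self] at hj'
              exact absurd hj' (by simp)
            · rw [hv', Function.update_of_ne hjj] at hj'
              exact mem_supp.mpr hj'
          have hj₀not : j₀ ∉ supp v' := by
            intro hmem
            have := mem_supp.mp hmem
            rw [hv', Function.update_self] at this
            exact absurd this (by simp)
          have hwt' : wt v' < wt v := by
            rw [← supp_card, ← supp_card]
            exact Finset.card_lt_card ⟨hsub, fun hss => hj₀not (hss hj₀mem)⟩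
          -- the transfer map τ
          have hmemτ : ∀ k : Fin (wt v'), ((isoV v' k : {x // x ∈ supp v'}) : Fin n) ∈ supp v :=
            fun k => hsub (isoV v' k).2
          set τ : (Fin (wt v) → Bool) → (Fin (wt v') → Bool) :=
            fun w k => w ((isoV v).symm ⟨((isoV v' k : {x // x ∈ supp v'}) : Fin n), hmemτ k⟩)
            with hτ
          have hτmor : IsDiscreteCubeMorphism τ := by
            intro k
            exact Or.inr (Or.inr (Or.inl ⟨(isoV v).symm
              ⟨((isoV v' k : {x // x ∈ supp v'}) : Fin n), hmemτ k⟩, fun w => rfl⟩))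
          have hkey : ∀ w j, emb v (Function.update w i false) j = emb v' (τ w) j := by
            intro w j
            by_cases hj : j ∈ supp v
            · by_cases hjj : j = j₀
              · subst hjj
                have h1 : emb v (Function.update w i false) j₀ = false := by
                  rw [emb, dif_pos hj]
                  have : (⟨j₀, hj⟩ : {x // x ∈ supp v}) = isoV v i := Subtype.ext rfl
                  rw [this, OrderIso.symm_apply_apply, Function.update_self]
                rw [h1, emb, dif_neg hj₀not]
              · have hj' : j ∈ supp v' := by
                  apply mem_supp.mpr
                  rw [hv', Function.update_of_ne hjj]
                  exact mem_supp.mp hj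
                have hne : (isoV v).symm ⟨j, hj⟩ ≠ i := by
                  intro hc'
                  apply hjj
                  have : (⟨j, hj⟩ : {x // x ∈ supp v}) = isoV v i := by
                    rw [← hc', OrderIso.apply_symm_apply]
                  have := congrArg (Subtype.val) this
                  exact this
                rw [emb, dif_pos hj, Function.update_of_ne hne, emb, dif_pos hj']
                rw [hτ]
                congr 1
                congr 1
                apply Subtype.ext
                show j = ((isoV v' ((isoV v').symm ⟨j, hj'⟩) : {x // x ∈ supp v'}) : Fin n)
                rw [OrderIso.apply_symm_apply]
            · have hj' : j ∉ supp v' := fun hmem => hj (hsub hmem)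
              rw [emb, dif_neg hj, emb, dif_neg hj']
          have hcube' := inv2 v' (by omega)
          have htrans := cube_map hS hτmor hcube'
          convert htrans using 1
          funext w
          exact congrArg lam (funext (hkey w))
        have htarget : (fun w => c (emb v w)) ∈ T.cubes (wt v) :=
          cube_map hT (emb_morph v) hc
        have hmatch : ∀ w, w ≠ topVtx (wt v) → φ (lam (emb v w)) = c (emb v w) := by
          intro w hw
          apply inv1
          have := wt_emb_lt hw
          omega
        exact (hcompl (wt v)) _ _ hcorner htarget hmatch
      set lam' : (Fin n → Bool) → X := fun v =>
        if h : wt v = m + 1 then (hfill v h).choose (topVtx (wt v)) else lam v with hlam'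
      have hlam'ev : ∀ v, lam' v =
          if h : wt v = m + 1 then (hfill v h).choose (topVtx (wt v)) else lam v :=
        fun _ => rfl
      have hlam'lo : ∀ v, wt v ≤ m → lam' v = lam v := by
        intro v hv
        rw [hlam'ev, dif_neg (by omega)]
      refine ⟨lam', ?_, ?_⟩
      · intro v hv
        by_cases h : wt v = m + 1
        · rw [hlam'ev, dif_pos h]
          obtain ⟨hmem, hagree, himg⟩ := (hfill v h).choose_spec
          have := congrFun himg (topVtx (wt v))
          rw [emb_top] at this
          exact this
        · rw [hlam'lo v (by omega)]
          exact inv1 v (by omega)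
      · intro v hv
        by_cases h : wt v = m + 1
        · obtain ⟨hmem, hagree, himg⟩ := (hfill v h).choose_spec
          have heq : (fun w => lam' (emb v w)) = (hfill v h).choose := by
            funext w
            by_cases hw : w = topVtx (wt v)
            · subst hw
              rw [emb_top, hlam'ev, dif_pos h]
            · have hlt := wt_emb_lt hw
              rw [hlam'lo (emb v w) (by omega), (hagree w hw).symm]
          rw [heq]
          exact hmem
        · have heq : (fun w => lam' (emb v w)) = fun w => lam (emb v w) := by
            funext w
            exact hlam'lo (emb v w) (by
              have := wt_emb_le v w
              omega)
          rw [heq]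
          exact inv2 v (by omega)
  obtain ⟨lam, inv1, inv2⟩ := main n
  -- reconstruct the full cube from the top-subcube invariant
  set Tv : Fin n → Bool := topVtx n with hTv
  have hTvmem : ∀ j : Fin n, j ∈ supp Tv := by
    intro j
    exact mem_supp.mpr rfl
  set ρ' : (Fin n → Bool) → (Fin (wt Tv) → Bool) :=
    fun ω i => ω ((isoV Tv i : {x // x ∈ supp Tv}) : Fin n) with hρ'
  have hρ'mor : IsDiscreteCubeMorphism ρ' := by
    intro i
    exact Or.inr (Or.inr (Or.inl ⟨((isoV Tv i : {x // x ∈ supp Tv}) : Fin n), fun ω => rfl⟩))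
  have hid : ∀ ω : Fin n → Bool, emb Tv (ρ' ω) = ω := by
    intro ω
    funext j
    rw [emb, dif_pos (hTvmem j), hρ']
    show ω ((isoV Tv ((isoV Tv).symm ⟨j, hTvmem j⟩) : {x // x ∈ supp Tv}) : Fin n) = ω j
    rw [OrderIso.apply_symm_apply]
  have hmem := cube_map hS hρ'mor (inv2 Tv (wt_le_n Tv))
  have hfin : (fun ω : Fin n → Bool => lam (emb Tv (ρ' ω))) = lam := by
    funext ω
    exact congrArg lam (hid ω)
  rw [hfin] at hmem
  exact ⟨lam, hmem, fun ω => inv1 ω (wt_le_n ω)⟩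

end PushAux

/-- pushforward of relative translations along vertical fibrations: let
`φ : X → Y`, `g : X → Z`, `h : Y → Z` be `s`-fibrations between compact ergodic gluing
cubespaces with `g = h ∘ φ`, `φ` surjective and vertical.  Then for every `i ≥ 1` there
is a group homomorphism `Φ : Aut_i(g) → Aut_i(h)` with `Φ(u) ∘ φ = φ ∘ u` for all
`u ∈ Aut_i(g)`. -/
theorem pushforward_translations {X Y Z : Type*}
    [MetricSpace X] [MetricSpace Y] [MetricSpace Z]
    [CompactSpace X] [CompactSpace Y] [CompactSpace Z]
    (S : CubeFamily X) (T : CubeFamily Y) (U : CubeFamily Z)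
    (hS : S.IsCubespace) (hT : T.IsCubespace) (hU : U.IsCubespace)
    (heS : IsErgodic S) (heT : IsErgodic T) (heU : IsErgodic U)
    (hgS : IsGluing S) (hgT : IsGluing T) (hgU : IsGluing U)
    (s : ℕ) (hs : 1 ≤ s)
    (φ : X → Y) (g : X → Z) (h : Y → Z)
    (hφ : IsSFibration S T φ s) (hg : IsSFibration S U g s) (hh : IsSFibration T U h s)
    (hφsurj : Function.Surjective φ) (hcomp : ∀ x, g x = h (φ x))
    (hvert : ∀ x x' : X, RelCanonRel T h (s - 1) (φ x) (φ x') →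
      RelCanonRel S g (s - 1) x x')
    (i : ℕ) (hi : 1 ≤ i) :
    ∃ Φ : (X → X) → (Y → Y),
      (∀ u : X → X, MemAut S g u i →
        MemAut T h (Φ u) i ∧ ∀ x : X, Φ u (φ x) = φ (u x)) ∧
      ∀ u v : X → X, MemAut S g u i → MemAut S g v i → Φ (u ∘ v) = Φ u ∘ Φ v := by
  classical
  obtain ⟨r, rfl⟩ : ∃ r, s = r + 1 := ⟨s - 1, by omega⟩
  set sec : Y → X := fun y => (hφsurj y).choose with hsec
  have hsecspec : ∀ y, φ (sec y) = y := fun y => (hφsurj y).choose_spec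
  set Φ : (X → X) → (Y → Y) := fun u y => φ (u (sec y)) with hΦ
  have hΦev : ∀ u y, Φ u y = φ (u (sec y)) := fun _ _ => rfl
  have hvert' : ∀ x x' : X, RelCanonRel T h r (φ x) (φ x') → RelCanonRel S g r x x' :=
    hvert
  -- the fiberwise concatenation property, for any map satisfying the translation axioms
  have hv2gen : ∀ (v : X → X),
      (∀ z : Z, IsTranslationOf (subFamily S (g ⁻¹' {z})) v 1) →
      ∀ (z : Z) (d : (Fin (r+1) → Bool) → X), d ∈ S.cubes (r+1) →
        (∀ ω, g (d ω) = z) → concatCube d (fun ω => v (d ω)) ∈ S.cubes (r+1+1) := by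
    intro v hv z d hd hfib
    have hdsub : d ∈ (subFamily S (g ⁻¹' {z})).cubes (r+1) :=
      ⟨hd, fun ω => by simpa using hfib ω⟩
    exact (PushAux.transP2 hS (hv z) hdsub).1
  -- data for u in Aut_i
  have hKdata : ∀ (u : X → X), MemAut S g u i →
      (∀ x x', φ x = φ x' → φ (u x) = φ (u x')) := by
    intro u hu
    have htr1 : ∀ z : Z, IsTranslationOf (subFamily S (g ⁻¹' {z})) u 1 :=
      fun z => PushAux.trans_to_one hS hi (hu.2.2 z)
    exact fun x x' hxx' => PushAux.Kcore hS hT hgS hφ.1.1 hh.2 hcomp hvert' u hu.2.1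
      (hv2gen u htr1) hxx'
  -- the inverse of u also satisfies the same kind of property
  have hKinv : ∀ (u : X → X), MemAut S g u i →
      ∃ u' : X → X, (∀ x, u (u' x) = x) ∧ (∀ x, u' (u x) = x) ∧
        (∀ x x', φ x = φ x' → φ (u' x) = φ (u' x')) := by
    intro u hu
    have hbij := hu.1.bijective
    set ue : X ≃ X := Equiv.ofBijective u hbij with hue
    set u' : X → X := fun x => ue.symm x with hu'
    have hru : ∀ x, u (u' x) = x := fun x => ue.apply_symm_apply x
    have hlu : ∀ x, u' (u x) = x := fun x => ue.symm_apply_apply x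
    have hg1 : ∀ x, g (u' x) = g x := by
      intro x
      rw [← hu.2.1 (u' x), hru]
    have htr1 : ∀ z : Z, IsTranslationOf (subFamily S (g ⁻¹' {z})) u 1 :=
      fun z => PushAux.trans_to_one hS hi (hu.2.2 z)
    have hv2' : ∀ (z : Z) (d : (Fin (r+1) → Bool) → X), d ∈ S.cubes (r+1) →
        (∀ ω, g (d ω) = z) → concatCube d (fun ω => u' (d ω)) ∈ S.cubes (r+1+1) := by
      intro z d hd hfib
      set e : (Fin (r+1) → Bool) → X := fun ω => u' (d ω) with he
      have hued : (fun ω => u (e ω)) = d := funext fun ω => hru (d ω)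
      have hdsub : d ∈ (subFamily S (g ⁻¹' {z})).cubes (r+1) :=
        ⟨hd, fun ω => by simpa using hfib ω⟩
      have hesub : e ∈ (subFamily S (g ⁻¹' {z})).cubes (r+1) := by
        apply ((htr1 z).1 (r+1) e).mpr
        rw [hued]
        exact hdsub
      have h1 := (PushAux.transP2 hS (htr1 z) hesub).1
      rw [show (fun ω => u (e ω)) = d from hued] at h1
      exact PushAux.rev_mem hS h1
    refine ⟨u', hru, hlu, ?_⟩
    exact fun x x' hxx' => PushAux.Kcore hS hT hgS hφ.1.1 hh.2 hcomp hvert' u' hg1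
      (hv2' ) hxx'
  -- basic properties of Φ u for u in Aut
  have hΦφ : ∀ (u : X → X), MemAut S g u i → ∀ x, Φ u (φ x) = φ (u x) := by
    intro u hu x
    exact hKdata u hu _ _ (hsecspec (φ x))
  have hΦh : ∀ (u : X → X), MemAut S g u i → ∀ y, h (Φ u y) = h y := by
    intro u hu y
    rw [hΦev, ← hcomp, hu.2.1, hcomp, hsecspec]
  have hΦinj : ∀ (u : X → X), MemAut S g u i → Function.Injective (Φ u) := by
    intro u hu y y' hyy'
    obtain ⟨u', hru, hlu, hK'⟩ := hKinv u hu
    rw [hΦev, hΦev] at hyy'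
    have := hK' _ _ hyy'
    rw [hlu, hlu] at this
    rw [← hsecspec y, ← hsecspec y', this]
  have hΦsurj : ∀ (u : X → X), MemAut S g u i → Function.Surjective (Φ u) := by
    intro u hu y'
    obtain ⟨u', hru, hlu, hK'⟩ := hKinv u hu
    refine ⟨φ (u' (sec y')), ?_⟩
    rw [hΦev]
    have h1 : φ (u (sec (φ (u' (sec y'))))) = φ (u (u' (sec y'))) :=
      hKdata u hu _ _ (hsecspec _)
    rw [h1, hru, hsecspec]
  have hq : Topology.IsQuotientMap φ :=
    (hφ.1.1.1.isClosedMap).isQuotientMap hφ.1.1.1 hφsurj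
  have hΦcont : ∀ (u : X → X), MemAut S g u i → Continuous (Φ u) := by
    intro u hu
    rw [hq.continuous_iff]
    have : Φ u ∘ φ = φ ∘ u := funext fun x => hΦφ u hu x
    rw [this]
    exact hφ.1.1.1.comp hu.1.continuous
  have hΦhomeo : ∀ (u : X → X), MemAut S g u i → IsHomeomorph (Φ u) := by
    intro u hu
    exact isHomeomorph_iff_continuous_bijective.mpr
      ⟨hΦcont u hu, hΦinj u hu, hΦsurj u hu⟩
  -- the translation property of Φ u on the fibers of h
  have hΦtrans : ∀ (u : X → X), MemAut S g u i → ∀ z : Z,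
      IsTranslationOf (subFamily T (h ⁻¹' {z})) (Φ u) i := by
    intro u hu z
    obtain ⟨u', hru, hlu, hK'⟩ := hKinv u hu
    constructor
    · -- the automorphism property
      intro n C
      constructor
      · rintro ⟨hC, hCval⟩
        obtain ⟨d, hd, hdφ⟩ := PushAux.lift_cube hS hT hφ.1.2 hφsurj n C hC
        have hdfib : ∀ ω, g (d ω) = z := by
          intro ω
          rw [hcomp, hdφ]
          simpa using hCval ω
        have hdsub : d ∈ (subFamily S (g ⁻¹' {z})).cubes n :=
          ⟨hd, fun ω => by simpa using hdfib ω⟩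
        have hudsub := ((hu.2.2 z).1 n d).mp hdsub
        have hpush := hφ.1.1.2 n _ hudsub.1
        refine ⟨?_, ?_⟩
        · have heq : (fun ω => Φ u (C ω)) = fun ω => φ (u (d ω)) := by
            funext ω
            rw [← hdφ, hΦφ u hu]
          rw [heq]
          exact hpush
        · intro ω
          simp only [Set.mem_preimage, Set.mem_singleton_iff]
          rw [hΦh u hu]
          simpa using hCval ω
      · rintro ⟨hC, hCval⟩
        have hCval' : ∀ ω, h (C ω) = z := by
          intro ω
          rw [← hΦh u hu]
          simpa using hCval ω
        obtain ⟨d, hd, hdφ⟩ := PushAux.lift_cube hS hT hφ.1.2 hφsurj n _ hC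
        have hdfib : ∀ ω, g (d ω) = z := by
          intro ω
          rw [hcomp, hdφ, hΦh u hu]
          exact hCval' ω
        have hdsub : d ∈ (subFamily S (g ⁻¹' {z})).cubes n :=
          ⟨hd, fun ω => by simpa using hdfib ω⟩
        set e : (Fin n → Bool) → X := fun ω => u' (d ω) with he
        have hued : (fun ω => u (e ω)) = d := funext fun ω => hru (d ω)
        have hesub : e ∈ (subFamily S (g ⁻¹' {z})).cubes n := by
          apply ((hu.2.2 z).1 n e).mpr
          rw [hued]
          exact hdsub
        have hφe := hφ.1.1.2 n _ hesub.1
        have hφeC : (fun ω => φ (e ω)) = C := by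
          funext ω
          apply hΦinj u hu
          rw [hΦφ u hu, he, hru, hdφ]
        rw [hφeC] at hφe
        exact ⟨hφe, fun ω => by
          simp only [Set.mem_preimage, Set.mem_singleton_iff]
          exact hCval' ω⟩
    · -- the face modification property
      intro n hin F hF C hC
      obtain ⟨hCc, hCval⟩ := hC
      have hCval' : ∀ ω, h (C ω) = z := fun ω => by simpa using hCval ω
      obtain ⟨d, hd, hdφ⟩ := PushAux.lift_cube hS hT hφ.1.2 hφsurj n C hCc
      have hdfib : ∀ ω, g (d ω) = z := by
        intro ω
        rw [hcomp, hdφ]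
        exact hCval' ω
      have hdsub : d ∈ (subFamily S (g ⁻¹' {z})).cubes n :=
        ⟨hd, fun ω => by simpa using hdfib ω⟩
      have hmod := (hu.2.2 z).2 n hin F hF d hdsub
      have hpush := hφ.1.1.2 n _ hmod.1
      have heq : (fun ω => φ (faceModify F u d ω)) = faceModify F (Φ u) C := by
        funext ω
        simp only [faceModify]
        by_cases hω : ω ∈ F
        · rw [if_pos hω, if_pos hω, ← hdφ, hΦφ u hu]
        · rw [if_neg hω, if_neg hω, hdφ]
      rw [heq] at hpush
      refine ⟨hpush, ?_⟩
      intro ω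
      simp only [Set.mem_preimage, Set.mem_singleton_iff, faceModify]
      by_cases hω : ω ∈ F
      · rw [if_pos hω, hΦh u hu]
        exact hCval' ω
      · rw [if_neg hω]
        exact hCval' ω
  refine ⟨Φ, ?_, ?_⟩
  · intro u hu
    exact ⟨⟨hΦhomeo u hu, hΦh u hu, hΦtrans u hu⟩, hΦφ u hu⟩
  · intro u v hu hv
    funext y
    show φ ((u ∘ v) (sec y)) = Φ u (Φ v y)
    rw [hΦev, hΦev]
    have := hKdata u hu _ _ (hsecspec (φ (v (sec y))))
    rw [this]
    rfl
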